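/- arXiv:1209.5104 — 2 statements merged into one kernel-verified Lean document; each statement's English description precedes it below -/
import Mathlib

section
/- Let K be a field, f = ∑_μ a_μ x^μ ∈ K[x_1,…,x_n] nonzero, let σ = ⟨u^{(1)},…,u^{(k)}⟩ be a polyhedral cone with generators u^{(i)} ∈ (ℝ_{≥0})^n, and let P ∈ supp(f). If for every ω in the relative interior of σ the ω-initial part In_ω f is the single term a_P x^P, then supp(f) ⊆ P + σ^∨. -/
open MvPolynomial Matrix

/-- The cone generated by vectors `u 0, …, u (k-1)` in `ℝ^n`. -/
def coneGen {n k : ℕ} (u : Fin k → (Fin n → ℝ)) : Set (Fin n → ℝ) :=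
  {x | ∃ lam : Fin k → ℝ, (∀ j, 0 ≤ lam j) ∧ x = ∑ j, lam j • u j}

/-- The dual cone of a subset of `ℝ^n`: vectors pairing nonnegatively with all of `s`. -/
def dualCone {n : ℕ} (s : Set (Fin n → ℝ)) : Set (Fin n → ℝ) :=
  {v | ∀ u ∈ s, 0 ≤ ∑ i, v i * u i}

/-- The cone generated by the columns of a real `n × n` matrix. -/
def coneOfCols {n : ℕ} (A : Matrix (Fin n) (Fin n) ℝ) : Set (Fin n → ℝ) :=
  {x | ∃ lam : Fin n → ℝ, (∀ i, 0 ≤ lam i) ∧ x = A.mulVec lam}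
open MvPolynomial Matrix

open Classical in
/-- The `w`-initial part of a multivariate polynomial: the sum of the terms whose
exponents have minimal `w`-weight among the exponents of `f`. -/
noncomputable def initialPart {n : ℕ} {K : Type*} [CommSemiring K] (w : Fin n → ℝ)
    (f : MvPolynomial (Fin n) K) : MvPolynomial (Fin n) K :=
  ∑ μ ∈ f.support,
    if ∀ ν ∈ f.support, ∑ i, w i * (μ i : ℝ) ≤ ∑ i, w i * (ν i : ℝ)
    then monomial μ (f.coeff μ) else 0

open MvPolynomial in
lemma key {n : ℕ} {K : Type*} [Field K] (f : MvPolynomial (Fin n) K) (w : Fin n → ℝ)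
    (P : Fin n →₀ ℕ) (hP : P ∈ f.support)
    (h : initialPart w f = monomial P (f.coeff P)) :
    ∀ ν ∈ f.support, ∑ i, w i * (P i : ℝ) ≤ ∑ i, w i * (ν i : ℝ) := by
  by_contra hc
  push_neg at hc
  obtain ⟨ν, hν, hlt⟩ := hc
  have h2 := congrArg (fun g => MvPolynomial.coeff P g) h
  simp only [initialPart, MvPolynomial.coeff_sum, apply_ite (MvPolynomial.coeff P),
    MvPolynomial.coeff_monomial, MvPolynomial.coeff_zero, if_pos rfl] at h2
  rw [Finset.sum_eq_single_of_mem P hP] at h2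
  · rw [if_neg] at h2
    · exact (MvPolynomial.mem_support_iff.mp hP) h2.symm
    · intro hall
      exact absurd (hall ν hν) (not_le.mpr hlt)
  · intro b _ hb
    split_ifs <;> simp_all

/-- Let `f` be nonzero, let `σ` be the cone generated by vectors
`u 1, …, u k` lying in the first orthant, and let `P ∈ supp f`.  If for every `ω` in the
relative interior of `σ` the initial part `In_ω f` is the single term `a_P x^P`, then
`supp f ⊆ P + σ^∨`. -/
theorem support_subset_vertex_add_dualCone {n k : ℕ} {K : Type*} [Field K]
    (f : MvPolynomial (Fin n) K) (hf : f ≠ 0)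
    (u : Fin k → (Fin n → ℝ)) (hu : ∀ j i, 0 ≤ u j i)
    (P : Fin n →₀ ℕ) (hP : P ∈ f.support)
    (hinit : ∀ lam : Fin k → ℝ, (∀ j, 0 < lam j) →
      initialPart (∑ j, lam j • u j) f = monomial P (f.coeff P)) :
    ∀ μ ∈ f.support, (fun i => (μ i : ℝ) - (P i : ℝ)) ∈ dualCone (coneGen u) := by
  intro μ hμ v hv
  obtain ⟨lam, hlam, rfl⟩ := hv
  set d : Fin n → ℝ := fun i => (μ i : ℝ) - (P i : ℝ) with hd
  set A : ℝ := ∑ i, (∑ j, lam j * u j i) * d i with hA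
  set B : ℝ := ∑ i, (∑ j, u j i) * d i with hB
  have hε : ∀ ε : ℝ, 0 < ε → 0 ≤ A + ε * B := by
    intro ε hεpos
    have hpos : ∀ j, 0 < lam j + ε := fun j => by linarith [hlam j]
    have h1 := key f (∑ j, (lam · + ε) j • u j) P hP (hinit _ hpos) μ hμ
    have h1' : 0 ≤ ∑ i, (∑ j, (lam j + ε) * u j i) * d i := by
      have h2 := sub_nonneg.mpr h1
      rw [← Finset.sum_sub_distrib] at h2
      refine le_of_le_of_eq h2 (Finset.sum_congr rfl fun i _ => ?_)
      simp only [Finset.sum_apply, Pi.smul_apply, smul_eq_mul, hd]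
      ring
    have h3 : ∀ i, ∑ j, (lam j + ε) * u j i = (∑ j, lam j * u j i) + ε * (∑ j, u j i) := by
      intro i
      rw [Finset.mul_sum, ← Finset.sum_add_distrib]
      exact Finset.sum_congr rfl fun j _ => by ring
    calc (0:ℝ) ≤ ∑ i, (∑ j, (lam j + ε) * u j i) * d i := h1'
      _ = ∑ i, ((∑ j, lam j * u j i) * d i + ε * ((∑ j, u j i) * d i)) := by
          exact Finset.sum_congr rfl fun i _ => by rw [h3 i]; ring
      _ = A + ε * B := by rw [Finset.sum_add_distrib, ← Finset.mul_sum]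
  have hA0 : 0 ≤ A := by
    by_contra hA'
    push_neg at hA'
    rcases le_or_gt B 0 with hB' | hB'
    · nlinarith [hε 1 one_pos]
    · have h3 := hε (-A / (2 * B)) (div_pos (neg_pos.mpr hA') (by linarith))
      have h4 : (-A / (2 * B)) * B = -A / 2 := by field_simp
      rw [h4] at h3
      linarith
  calc (0:ℝ) ≤ A := hA0
    _ = ∑ i, d i * (∑ j, lam j • u j) i := by
        simp only [Finset.sum_apply, Pi.smul_apply, smul_eq_mul]
        exact Finset.sum_congr rfl fun i _ => mul_comm _ _
end

section
/- Let K be a field, f ∈ K[x_1,…,x_n] nonzero, and M an n×n unimodular matrix with nonnegative integer entries. Assume the cone generated by the columns of M^t is good for f, i.e. the initial part In_u f is the same polynomial for all u = M^t λ with λ ∈ (ℝ_{>0})^n. Then the Newton polyhedron of f∘φ_M has only one vertex; explicitly, there exist P ∈ ℕ^n and h ∈ K[x_1,…,x_n] with h(0) ≠ 0 such that f∘φ_M = x^P·h. -/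
open MvPolynomial Matrix

/-- The monomial substitution `φ_M` on polynomials: `x_i ↦ ∏_j x_j ^ (M j i)`,
so that `x^μ ↦ x^(Mμ)`. -/
noncomputable def monomialSubst {n : ℕ} {K : Type*} [CommSemiring K]
    (M : Matrix (Fin n) (Fin n) ℕ) (f : MvPolynomial (Fin n) K) : MvPolynomial (Fin n) K :=
  aeval (fun i => ∏ j, (X j : MvPolynomial (Fin n) K) ^ M j i) f

/-- A nonnegative integer square matrix is unimodular if its determinant (over `ℤ`) is `±1`. -/
def IsUnimodular {n : ℕ} (M : Matrix (Fin n) (Fin n) ℕ) : Prop :=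
  (M.map fun a => (a : ℤ)).det = 1 ∨ (M.map fun a => (a : ℤ)).det = -1

/-! ### Auxiliary lemmas -/

/-- The image of an exponent vector under the matrix `M`, as a finitely supported function. -/
noncomputable def pvec {n : ℕ} (M : Matrix (Fin n) (Fin n) ℕ) (μ : Fin n →₀ ℕ) : Fin n →₀ ℕ :=
  Finsupp.equivFunOnFinite.symm (fun j => ∑ i, M j i * μ i)

lemma pvec_apply {n : ℕ} (M : Matrix (Fin n) (Fin n) ℕ) (μ : Fin n →₀ ℕ) (j : Fin n) :
    pvec M μ j = ∑ i, M j i * μ i := rfl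

lemma pvec_injective {n : ℕ} (M : Matrix (Fin n) (Fin n) ℕ) (hM : IsUnimodular M)
    {μ ν : Fin n →₀ ℕ} (h : pvec M μ = pvec M ν) : μ = ν := by
  have hdet : ((M.map fun a => (a : ℚ)).det) ≠ 0 := by
    have hmm : (M.map fun a => (a : ℚ)) = (M.map fun a => (a : ℤ)).map fun a => (a : ℚ) := by
      ext i j; simp
    have hd : ((M.map fun a => (a : ℤ)).map fun a => (a : ℚ)).det
        = (((M.map fun a => (a : ℤ)).det : ℤ) : ℚ) := by
      have := RingHom.map_det (Int.castRingHom ℚ) (M.map fun a => (a : ℤ))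
      simpa [RingHom.mapMatrix_apply] using this.symm
    rw [hmm, hd]
    rcases hM with h1 | h1 <;> rw [h1] <;> norm_num
  have hinj : Function.Injective ((M.map fun a => (a : ℚ)).mulVec) :=
    mulVec_injective_iff_isUnit.mpr
      ((Matrix.isUnit_iff_isUnit_det _).mpr (isUnit_iff_ne_zero.mpr hdet))
  have hmv : (M.map fun a => (a : ℚ)).mulVec (fun i => (μ i : ℚ))
      = (M.map fun a => (a : ℚ)).mulVec (fun i => (ν i : ℚ)) := by
    funext j
    have hj : pvec M μ j = pvec M ν j := by rw [h]
    rw [pvec_apply, pvec_apply] at hj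
    simp only [mulVec, dotProduct, map_apply]
    exact_mod_cast hj
  have := hinj hmv
  ext i
  have := congrFun this i
  exact_mod_cast this

open Classical in
lemma coeff_initialPart {n : ℕ} {K : Type*} [CommSemiring K] (w : Fin n → ℝ)
    (f : MvPolynomial (Fin n) K) (μ : Fin n →₀ ℕ) (hμ : μ ∈ f.support) :
    (initialPart w f).coeff μ =
      if ∀ ν ∈ f.support, ∑ i, w i * (μ i : ℝ) ≤ ∑ i, w i * (ν i : ℝ)
      then f.coeff μ else 0 := by
  unfold initialPart
  rw [coeff_sum]
  rw [Finset.sum_eq_single_of_mem μ hμ]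
  · split_ifs with h
    · rw [coeff_monomial, if_pos rfl]
    · simp
  · intro ν hν hne
    split_ifs with h
    · rw [coeff_monomial, if_neg hne]
    · simp

lemma monomial_one_eq_prod_univ {n : ℕ} {K : Type*} [CommSemiring K] (d : Fin n →₀ ℕ) :
    (monomial d (1 : K)) = ∏ j, (X j : MvPolynomial (Fin n) K) ^ d j := by
  rw [← prod_X_pow_eq_monomial]
  exact Finset.prod_subset (Finset.subset_univ d.support) (fun j _ hj => by
    rw [Finsupp.notMem_support_iff.mp hj, pow_zero])

lemma monomialSubst_monomial {n : ℕ} {K : Type*} [CommSemiring K]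
    (M : Matrix (Fin n) (Fin n) ℕ) (μ : Fin n →₀ ℕ) (c : K) :
    monomialSubst M (monomial μ c) = monomial (pvec M μ) c := by
  unfold monomialSubst
  rw [aeval_monomial]
  rw [Finsupp.prod_fintype _ _ (fun i => pow_zero _)]
  have h2 : ∏ i, (∏ j, (X j : MvPolynomial (Fin n) K) ^ M j i) ^ μ i
      = ∏ j, (X j : MvPolynomial (Fin n) K) ^ (pvec M μ j) := by
    simp_rw [← Finset.prod_pow, ← pow_mul]
    rw [Finset.prod_comm]
    simp_rw [Finset.prod_pow_eq_pow_sum]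
    rfl
  rw [h2, ← monomial_one_eq_prod_univ]
  rw [MvPolynomial.algebraMap_eq, C_mul_monomial, mul_one]

lemma monomialSubst_eq_sum {n : ℕ} {K : Type*} [CommSemiring K]
    (M : Matrix (Fin n) (Fin n) ℕ) (f : MvPolynomial (Fin n) K) :
    monomialSubst M f = ∑ μ ∈ f.support, monomial (pvec M μ) (f.coeff μ) := by
  conv_lhs => rw [← support_sum_monomial_coeff f]
  unfold monomialSubst
  rw [map_sum]
  exact Finset.sum_congr rfl fun μ _ => monomialSubst_monomial M μ _

/-- If `M` is a nonnegative unimodular matrix such that the cone generated by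
the columns of `Mᵀ` is good for the nonzero polynomial `f` (the initial part `In_u f` is
the same for all `u = Mᵀλ` with `λ` strictly positive), then the Newton polyhedron of
`f ∘ φ_M` has only one vertex: `f ∘ φ_M = x^P · h` with `h(0) ≠ 0`. -/
theorem monomialSubst_eq_monomial_mul_unit {n : ℕ} {K : Type*} [Field K]
    (f : MvPolynomial (Fin n) K) (hf : f ≠ 0)
    (M : Matrix (Fin n) (Fin n) ℕ) (hM : IsUnimodular M)
    (hgood : ∀ lam lam' : Fin n → ℝ, (∀ i, 0 < lam i) → (∀ i, 0 < lam' i) →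
      initialPart (((M.map ((↑) : ℕ → ℝ))ᵀ).mulVec lam) f =
        initialPart (((M.map ((↑) : ℕ → ℝ))ᵀ).mulVec lam') f) :
    ∃ (P : Fin n →₀ ℕ) (h : MvPolynomial (Fin n) K),
      monomialSubst M f = monomial P 1 * h ∧ eval (0 : Fin n → K) h ≠ 0 := by
  classical
  set A : Matrix (Fin n) (Fin n) ℝ := (M.map ((↑) : ℕ → ℝ))ᵀ with hA
  -- weight identity
  have hw : ∀ (lam : Fin n → ℝ) (μ : Fin n →₀ ℕ),
      ∑ i, (A.mulVec lam) i * (μ i : ℝ) = ∑ j, lam j * (pvec M μ j : ℝ) := by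
    intro lam μ
    have hcast : ∀ j, ((pvec M μ j : ℕ) : ℝ) = ∑ i, (M j i : ℝ) * (μ i : ℝ) := by
      intro j; rw [pvec_apply]; push_cast; rfl
    simp only [hA, mulVec, dotProduct, transpose_apply, map_apply, hcast, Finset.mul_sum,
      Finset.sum_mul]
    rw [Finset.sum_comm]
    exact Finset.sum_congr rfl fun j _ => Finset.sum_congr rfl fun i _ => by ring
  -- choose a minimizer for λ = 1
  obtain ⟨μ0, hμ0, hmin⟩ := Finset.exists_min_image f.support (fun μ => ∑ j, pvec M μ j)
    (support_nonempty.mpr hf)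
  have hone : ∀ i, (0 : ℝ) < (fun _ : Fin n => (1 : ℝ)) i := fun i => one_pos
  -- the condition in initialPart holds for μ0 at λ = 1
  have hcond1 : ∀ ν ∈ f.support,
      ∑ i, (A.mulVec fun _ => (1 : ℝ)) i * (μ0 i : ℝ)
        ≤ ∑ i, (A.mulVec fun _ => (1 : ℝ)) i * (ν i : ℝ) := by
    intro ν hν
    rw [hw, hw]
    simp only [one_mul]
    have := hmin ν hν
    rw [← Nat.cast_sum, ← Nat.cast_sum]
    exact_mod_cast this
  -- transport to all positive λ
  have key : ∀ lam : Fin n → ℝ, (∀ i, 0 < lam i) → ∀ ν ∈ f.support,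
      ∑ j, lam j * (pvec M μ0 j : ℝ) ≤ ∑ j, lam j * (pvec M ν j : ℝ) := by
    intro lam hlam ν hν
    have hg := hgood lam (fun _ => 1) hlam hone
    have h1 : (initialPart (A.mulVec fun _ => (1 : ℝ)) f).coeff μ0 ≠ 0 := by
      rw [coeff_initialPart _ f μ0 hμ0, if_pos hcond1]
      exact mem_support_iff.mp hμ0
    have h2 : (initialPart (A.mulVec lam) f).coeff μ0 ≠ 0 := by rw [hA] at h1 ⊢; rw [hg]; exact h1
    rw [coeff_initialPart _ f μ0 hμ0] at h2
    by_cases hc : ∀ ν' ∈ f.support,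
        ∑ i, (A.mulVec lam) i * (μ0 i : ℝ) ≤ ∑ i, (A.mulVec lam) i * (ν' i : ℝ)
    · have := hc ν hν
      rw [hw, hw] at this
      exact this
    · rw [if_neg hc] at h2; exact absurd rfl h2
  -- componentwise minimality
  have hle : ∀ ν ∈ f.support, pvec M μ0 ≤ pvec M ν := by
    intro ν hν
    rw [Finsupp.le_def]
    intro j0
    by_contra hlt
    push_neg at hlt
    set t : ℝ := (∑ j, (pvec M ν j : ℝ)) + 1 with ht
    have htpos : 0 < t := by positivity
    have hlampos : ∀ i, 0 < (fun j => 1 + if j = j0 then t else 0) i := by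
      intro i; dsimp only; split_ifs <;> linarith
    have hsum : ∀ c : Fin n → ℝ,
        ∑ j, (1 + if j = j0 then t else 0) * c j = (∑ j, c j) + t * c j0 := by
      intro c
      simp only [add_mul, one_mul, ite_mul, zero_mul, Finset.sum_add_distrib]
      rw [Finset.sum_ite_eq' Finset.univ j0 (fun j => t * c j)]
      simp
    have hk := key (fun j => 1 + if j = j0 then t else 0) hlampos ν hν
    rw [hsum, hsum] at hk
    have hc1 : (pvec M ν j0 : ℝ) + 1 ≤ (pvec M μ0 j0 : ℝ) := by exact_mod_cast hlt
    have hSA : (0 : ℝ) ≤ ∑ j, (pvec M μ0 j : ℝ) := by positivity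
    nlinarith [mul_le_mul_of_nonneg_left hc1 (le_of_lt htpos)]
  -- construct P and h
  refine ⟨pvec M μ0, ∑ μ ∈ f.support, monomial (pvec M μ - pvec M μ0) (f.coeff μ), ?_, ?_⟩
  · rw [monomialSubst_eq_sum, Finset.mul_sum]
    refine Finset.sum_congr rfl fun μ hμ => ?_
    rw [monomial_mul, one_mul, add_tsub_cancel_of_le (hle μ hμ)]
  · rw [map_sum, Finset.sum_eq_single_of_mem μ0 hμ0]
    · rw [tsub_self]
      simp [eval_monomial]
      exact mem_support_iff.mp hμ0
    · intro ν hν hne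
      have hne' : pvec M ν - pvec M μ0 ≠ 0 := by
        intro h0
        refine hne (pvec_injective M hM (le_antisymm (tsub_eq_zero_iff_le.mp h0) (hle ν hν)))
      obtain ⟨i, hi⟩ := Finsupp.ne_iff.mp hne'
      rw [eval_monomial]
      have hi' : i ∈ (pvec M ν - pvec M μ0).support := Finsupp.mem_support_iff.mpr (by simpa using hi)
      rw [Finsupp.prod, Finset.prod_eq_zero hi' (by simp [zero_pow (by simpa using hi)]), mul_zero]
end
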